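/- Let A, M ∈ Mₙ(F₃) satisfy A³ = A² + A + I, M² = 0, and (A + M)³ = A + M. Then M A M = 0 and M A² M = 0. -/
import Mathlib


open Matrix

set_option maxHeartbeats 2000000 in
/-- Step (4): over 𝔽₃, if A³ = A² + A + I, M² = 0 and (A+M)³ = A+M, then
M A M = 0 and M A² M = 0. -/
theorem stmt_17 {n : ℕ} (A M : Matrix (Fin n) (Fin n) (ZMod 3))
    (hA : A ^ 3 = A ^ 2 + A + 1) (hM : M ^ 2 = 0)
    (hD : (A + M) ^ 3 = A + M) :
    M * A * M = 0 ∧ M * A ^ 2 * M = 0 := by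
  have h30 : (3 : Matrix (Fin n) (Fin n) (ZMod 3)) = 0 := by
    have h : (3 : Matrix (Fin n) (Fin n) (ZMod 3)) = (1 : Matrix (Fin n) (Fin n) (ZMod 3)) + 1 + 1 := by
      norm_num
    rw [h]; ext i j
    simp [Matrix.add_apply, Matrix.one_apply]
    split_ifs <;> decide
  have zA : A ^ 3 - (A ^ 2 + A + 1) = 0 := by rw [hA]; exact sub_self _
  have hH : A ^ 2 + 1 + A ^ 2 * M + A * M * A + M * A ^ 2 + M * A * M - M = 0 := by
    have key : A ^ 2 + 1 + A ^ 2 * M + A * M * A + M * A ^ 2 + M * A * M - M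
        = ((A + M) ^ 3 - (A + M)) - (A ^ 3 - (A ^ 2 + A + 1)) - A * M ^ 2 - M ^ 2 * A - M * M ^ 2 := by
      noncomm_ring
    rw [key, hD, zA, hM]; simp
  -- z1 : M A² M + M A M A M = 0
  have z1 : M * A ^ 2 * M + M * A * M * A * M = 0 := by
    have key : M * A ^ 2 * M + M * A * M * A * M
        = M * (A ^ 2 + 1 + A ^ 2 * M + A * M * A + M * A ^ 2 + M * A * M - M) * M
          - M * A ^ 2 * M ^ 2 - M ^ 2 - M ^ 2 * A ^ 2 * M - M ^ 2 * A * M ^ 2 + M ^ 2 * M := by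
      noncomm_ring
    rw [key, hH, hM]; simp
  -- z2
  have z2 : M * A ^ 2 * M + M * A * M + M * A * M + M * A ^ 2 * M * A * M + M * A * M * A ^ 2 * M = 0 := by
    have key : M * A ^ 2 * M + M * A * M + M * A * M + M * A ^ 2 * M * A * M + M * A * M * A ^ 2 * M
        = M * (A ^ 2 + 1 + A ^ 2 * M + A * M * A + M * A ^ 2 + M * A * M - M) * (A * M)
          - M * (A ^ 3 - (A ^ 2 + A + 1)) * M
          - M ^ 2 - M ^ 2 * A ^ 3 * M + M ^ 2 * A * M - M ^ 2 * A * M * A * M := by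
      noncomm_ring
    rw [key, hH, zA, hM]; simp
  -- z3
  have z3 : M * A * M + M * A * M + M * A ^ 2 * M * A * M + M * A * M * A * M + M * A ^ 2 * M * A ^ 2 * M = 0 := by
    have key : M * A * M + M * A * M + M * A ^ 2 * M * A * M + M * A * M * A * M + M * A ^ 2 * M * A ^ 2 * M
        = M * A ^ 2 * (A ^ 2 + 1 + A ^ 2 * M + A * M * A + M * A ^ 2 + M * A * M - M) * M
          - M * A * (A ^ 3 - (A ^ 2 + A + 1)) * M
          - M * (A ^ 3 - (A ^ 2 + A + 1)) * M
          - M * (A ^ 3 - (A ^ 2 + A + 1)) * (M * A * M)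
          - (3 : Matrix (Fin n) (Fin n) (ZMod 3)) * (M * A ^ 2 * M)
          - M * A ^ 4 * M ^ 2 - M * A ^ 2 * M * A * M ^ 2 + M * A ^ 2 * M ^ 2
          - M ^ 2 - M ^ 2 * A * M := by
      noncomm_ring
    rw [key, hH, zA, hM, h30]; simp
  have z4 : M * A ^ 2 * M * A * M + M * A * M * A * M * A * M = 0 := by
    have key : M * A ^ 2 * M * A * M + M * A * M * A * M * A * M
        = (M * A ^ 2 * M + M * A * M * A * M) * (A * M) := by noncomm_ring
    rw [key, z1]; simp
  have z5 : M * A * M * A ^ 2 * M + M * A * M * A * M * A * M = 0 := by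
    have key : M * A * M * A ^ 2 * M + M * A * M * A * M * A * M
        = M * A * (M * A ^ 2 * M + M * A * M * A * M) := by noncomm_ring
    rw [key, z1]; simp
  have z7 : M * A * M + M * A * M - M * A * M * A * M - M * A * M * A * M * A * M - M * A * M * A * M * A * M = 0 := by
    have key : M * A * M + M * A * M - M * A * M * A * M - M * A * M * A * M * A * M - M * A * M * A * M * A * M
        = (M * A ^ 2 * M + M * A * M + M * A * M + M * A ^ 2 * M * A * M + M * A * M * A ^ 2 * M)
          - (M * A ^ 2 * M * A * M + M * A * M * A * M * A * M)
          - (M * A * M * A ^ 2 * M + M * A * M * A * M * A * M)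
          - (M * A ^ 2 * M + M * A * M * A * M) := by noncomm_ring
    rw [key, z2, z4, z5, z1]; simp
  have z8 : M * A * M * A * M + M * A * M * A * M - M * A * M * A * M * A * M
      - M * A * M * A * M * A * M * A * M - M * A * M * A * M * A * M * A * M = 0 := by
    have key : M * A * M * A * M + M * A * M * A * M - M * A * M * A * M * A * M
        - M * A * M * A * M * A * M * A * M - M * A * M * A * M * A * M * A * M
        = M * A * (M * A * M + M * A * M - M * A * M * A * M - M * A * M * A * M * A * M - M * A * M * A * M * A * M) := by
      noncomm_ring
    rw [key, z7]; simp
  have z9 : M * A ^ 2 * M * A ^ 2 * M - M * A * M * A * M * A * M * A * M = 0 := by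
    have key : M * A ^ 2 * M * A ^ 2 * M - M * A * M * A * M * A * M * A * M
        = (M * A ^ 2 * M + M * A * M * A * M) * (A ^ 2 * M)
          - M * A * M * A * (M * A ^ 2 * M + M * A * M * A * M) := by noncomm_ring
    rw [key, z1]; simp
  have z10 : M * A * M + M * A * M - M * A * M * A * M * A * M + M * A * M * A * M
      + M * A * M * A * M * A * M * A * M = 0 := by
    have key : M * A * M + M * A * M - M * A * M * A * M * A * M + M * A * M * A * M
        + M * A * M * A * M * A * M * A * M
        = (M * A * M + M * A * M + M * A ^ 2 * M * A * M + M * A * M * A * M + M * A ^ 2 * M * A ^ 2 * M)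
          - (M * A ^ 2 * M * A * M + M * A * M * A * M * A * M)
          - (M * A ^ 2 * M * A ^ 2 * M - M * A * M * A * M * A * M * A * M) := by noncomm_ring
    rw [key, z3, z4, z9]; simp
  have z11 : M * A * M * A * M + M * A * M = 0 := by
    have key : M * A * M * A * M + M * A * M
        = (M * A * M * A * M + M * A * M * A * M - M * A * M * A * M * A * M
            - M * A * M * A * M * A * M * A * M - M * A * M * A * M * A * M * A * M)
          + (M * A * M + M * A * M - M * A * M * A * M * A * M + M * A * M * A * M
            + M * A * M * A * M * A * M * A * M)
          + (M * A * M + M * A * M - M * A * M * A * M * A * M + M * A * M * A * M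
            + M * A * M * A * M * A * M * A * M)
          - (3 : Matrix (Fin n) (Fin n) (ZMod 3)) * (M * A * M)
          - (3 : Matrix (Fin n) (Fin n) (ZMod 3)) * (M * A * M * A * M)
          + (3 : Matrix (Fin n) (Fin n) (ZMod 3)) * (M * A * M * A * M * A * M) := by noncomm_ring
    rw [key, z8, z10, h30]; simp
  have z12 : M * A * M * A * M * A * M + M * A * M * A * M = 0 := by
    have key : M * A * M * A * M * A * M + M * A * M * A * M
        = M * A * (M * A * M * A * M + M * A * M) := by noncomm_ring
    rw [key, z11]; simp
  have z13 : M * A * M * A * M * A * M = 0 := by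
    have key : M * A * M * A * M * A * M
        = -(M * A * M + M * A * M - M * A * M * A * M - M * A * M * A * M * A * M - M * A * M * A * M * A * M)
          - (M * A * M + M * A * M - M * A * M * A * M - M * A * M * A * M * A * M - M * A * M * A * M * A * M)
          - (M * A * M * A * M + M * A * M) - (M * A * M * A * M + M * A * M)
          + (3 : Matrix (Fin n) (Fin n) (ZMod 3)) * (M * A * M + M * A * M)
          - (3 : Matrix (Fin n) (Fin n) (ZMod 3)) * (M * A * M * A * M * A * M) := by noncomm_ring
    rw [key, z7, z11, h30]; simp
  have zP : M * A * M = 0 := by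
    have key : M * A * M
        = (M * A * M * A * M + M * A * M) - (M * A * M * A * M * A * M + M * A * M * A * M)
          + M * A * M * A * M * A * M := by noncomm_ring
    rw [key, z11, z12, z13]; simp
  refine ⟨zP, ?_⟩
  have key : M * A ^ 2 * M
      = (M * A ^ 2 * M + M * A * M * A * M) - (M * A * M * A * M + M * A * M) + M * A * M := by
    noncomm_ring
  rw [key, z1, z11, zP]; simp
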